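/- Let T be a tree with (T, S) ∈ 𝒯 for some labeling S, and let v be a leaf of T. Then there exists a set X ⊆ V(T) with |X| = γ_t(T) − 1 such that v ∈ X and every vertex of T except v has a neighbor in X. -/

import Mathlib

open SimpleGraph

/-- `S` is a super dominating set of `G`: every vertex `u ∉ S` has some `v ∈ S`
with `N(v) ∩ Sᶜ = {u}`. -/
def SuperDomSet {V : Type} (G : SimpleGraph V) (S : Set V) : Prop :=
  ∀ u ∈ Sᶜ, ∃ v ∈ S, G.neighborSet v ∩ Sᶜ = {u}

/-- The super domination number `γ_sp(G)`. -/
noncomputable def superDomNum {V : Type} (G : SimpleGraph V) : ℕ :=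
  sInf {n | ∃ S : Set V, SuperDomSet G S ∧ S.ncard = n}

/-- `S` is a dominating set of `G`. -/
def DomSet {V : Type} (G : SimpleGraph V) (S : Set V) : Prop :=
  ∀ u ∉ S, ∃ v ∈ S, G.Adj v u

/-- The domination number `γ(G)`. -/
noncomputable def domNum {V : Type} (G : SimpleGraph V) : ℕ :=
  sInf {n | ∃ S : Set V, DomSet G S ∧ S.ncard = n}

/-- `S` is a total dominating set of `G`: every vertex has a neighbor in `S`. -/
def TotalDomSet {V : Type} (G : SimpleGraph V) (S : Set V) : Prop :=
  ∀ u : V, ∃ v ∈ S, G.Adj v u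

/-- The total domination number `γ_t(G)`. -/
noncomputable def totalDomNum {V : Type} (G : SimpleGraph V) : ℕ :=
  sInf {n | ∃ S : Set V, TotalDomSet G S ∧ S.ncard = n}

/-- A leaf is a vertex of degree 1. -/
def IsLeaf {V : Type} (G : SimpleGraph V) (v : V) : Prop :=
  (G.neighborSet v).ncard = 1

/-- A support vertex is a vertex adjacent to a leaf. -/
def IsSupport {V : Type} (G : SimpleGraph V) (v : V) : Prop :=
  ∃ u, G.Adj v u ∧ IsLeaf G u

/-- Attach a path `u₁u₂u₃u₄u₅u₆` (indices `0,…,5`) to `G` together with the edge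
joining `u₃` (index `2`) to `v`. -/
def attachPath6 {V : Type} (G : SimpleGraph V) (v : V) : SimpleGraph (V ⊕ Fin 6) where
  Adj x y :=
    match x, y with
    | Sum.inl a, Sum.inl b => G.Adj a b
    | Sum.inl a, Sum.inr i => a = v ∧ (i : ℕ) = 2
    | Sum.inr i, Sum.inl a => a = v ∧ (i : ℕ) = 2
    | Sum.inr i, Sum.inr j => (SimpleGraph.pathGraph 6).Adj i j
  symm := ⟨by
    rintro (a | i) (b | j) h
    · exact h.symm
    · exact h
    · exact h
    · exact (SimpleGraph.pathGraph 6).symm.symm _ _ h⟩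
  loopless := ⟨by
    rintro (a | i) h
    · exact G.loopless.irrefl a h
    · exact (SimpleGraph.pathGraph 6).loopless.irrefl i h⟩

/-- Vertex statuses for labeled trees. -/
inductive Status : Type
  | A | B | C
deriving DecidableEq

/-- The labeling of the (attached or base) path `P₆`: statuses `C,A,B,B,A,C`. -/
def pathLabel : Fin 6 → Status := fun i =>
  if (i : ℕ) = 0 ∨ (i : ℕ) = 5 then Status.C
  else if (i : ℕ) = 1 ∨ (i : ℕ) = 4 then Status.A
  else Status.B

/-- The family 𝒯 of labeled trees: it contains `(P₆, S₀)` (leaves labeled `C`,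
support vertices labeled `A`, middle vertices labeled `B`) and is closed under
operation 𝒪: for a vertex `v` of status `B`, attach a path `u₁…u₆` by the edge
`u₃v`, labeling `u₁,…,u₆` with `C,A,B,B,A,C`. -/
inductive InT : (W : Type) → SimpleGraph W → (W → Status) → Prop
  | base : InT (Fin 6) (SimpleGraph.pathGraph 6) pathLabel
  | step {W : Type} {G : SimpleGraph W} {L : W → Status} (h : InT W G L)
      (v : W) (hv : L v = Status.B) :
      InT (W ⊕ Fin 6) (attachPath6 G v)
        (fun x => match x with | Sum.inl a => L a | Sum.inr i => pathLabel i)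

open Sum

-- ## auxiliary lemmas

lemma attach_adj_ll {V : Type} {G : SimpleGraph V} {v a b : V} :
    (attachPath6 G v).Adj (inl a) (inl b) ↔ G.Adj a b := Iff.rfl

lemma attach_adj_lr {V : Type} {G : SimpleGraph V} {v a : V} {i : Fin 6} :
    (attachPath6 G v).Adj (inl a) (inr i) ↔ (a = v ∧ (i : ℕ) = 2) := Iff.rfl

lemma attach_adj_rl {V : Type} {G : SimpleGraph V} {v a : V} {i : Fin 6} :
    (attachPath6 G v).Adj (inr i) (inl a) ↔ (a = v ∧ (i : ℕ) = 2) := Iff.rfl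

lemma attach_adj_rr {V : Type} {G : SimpleGraph V} {v : V} {i j : Fin 6} :
    (attachPath6 G v).Adj (inr i) (inr j) ↔ (pathGraph 6).Adj i j := Iff.rfl

lemma mem2_ncard {X : Type} {D : Set X} (hD : D.Finite) {a b : X}
    (ha : a ∈ D) (hb : b ∈ D) (hab : a ≠ b) : 2 ≤ D.ncard := by
  have hsub : ({a, b} : Set X) ⊆ D := by
    intro x hx; rcases hx with rfl | rfl <;> assumption
  have h2 : ({a, b} : Set X).ncard = 2 := by
    rw [Set.ncard_insert_of_notMem (by simp [hab]) (Set.finite_singleton b),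
      Set.ncard_singleton]
  calc 2 = ({a, b} : Set X).ncard := h2.symm
    _ ≤ D.ncard := Set.ncard_le_ncard hsub hD

lemma mem4_ncard {X : Type} {D : Set X} (hD : D.Finite) {a b c d : X}
    (ha : a ∈ D) (hb : b ∈ D) (hc : c ∈ D) (hd : d ∈ D)
    (hab : a ≠ b) (hac : a ≠ c) (had : a ≠ d) (hbc : b ≠ c) (hbd : b ≠ d)
    (hcd : c ≠ d) : 4 ≤ D.ncard := by
  have hsub : ({a, b, c, d} : Set X) ⊆ D := by
    intro x hx; rcases hx with rfl | rfl | rfl | rfl <;> assumption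
  have h4 : ({a, b, c, d} : Set X).ncard = 4 := by
    rw [Set.ncard_insert_of_notMem (by simp [hab, hac, had])
        (((Set.finite_singleton d).insert c).insert b),
      Set.ncard_insert_of_notMem (by simp [hbc, hbd])
        ((Set.finite_singleton d).insert c),
      Set.ncard_insert_of_notMem (by simp [hcd]) (Set.finite_singleton d),
      Set.ncard_singleton]
  calc 4 = ({a, b, c, d} : Set X).ncard := h4.symm
    _ ≤ D.ncard := Set.ncard_le_ncard hsub hD

lemma ncard1234 : ({1, 2, 3, 4} : Set (Fin 6)).ncard = 4 := by
  have : ({1, 2, 3, 4} : Set (Fin 6)) = ↑({1, 2, 3, 4} : Finset (Fin 6)) := by simp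
  rw [this, Set.ncard_coe_finset]; decide

lemma ncard034 : ({0, 3, 4} : Set (Fin 6)).ncard = 3 := by
  have : ({0, 3, 4} : Set (Fin 6)) = ↑({0, 3, 4} : Finset (Fin 6)) := by simp
  rw [this, Set.ncard_coe_finset]; decide

lemma ncard521 : ({5, 2, 1} : Set (Fin 6)).ncard = 3 := by
  have : ({5, 2, 1} : Set (Fin 6)) = ↑({5, 2, 1} : Finset (Fin 6)) := by simp
  rw [this, Set.ncard_coe_finset]; decide

lemma pg_adj {i j : Fin 6} (h : (i : ℕ) + 1 = (j : ℕ) ∨ (j : ℕ) + 1 = (i : ℕ)) :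
    (pathGraph 6).Adj i j := by rw [pathGraph_adj]; exact h

lemma attach_nbr_inl {V : Type} {G : SimpleGraph V} {v a : V} (hav : a ≠ v) :
    (attachPath6 G v).neighborSet (inl a) = inl '' G.neighborSet a := by
  ext x
  rcases x with b | i
  · simp only [mem_neighborSet, attach_adj_ll, Set.mem_image]
    constructor
    · exact fun h => ⟨b, h, rfl⟩
    · rintro ⟨c, hc, hcb⟩; cases hcb; exact hc
  · simp only [mem_neighborSet, attach_adj_lr, Set.mem_image]
    constructor
    · rintro ⟨h, -⟩; exact absurd h hav
    · rintro ⟨c, -, h⟩; cases h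

theorem InT_key {W : Type} {G : SimpleGraph W} {L : W → Status} (h : InT W G L) :
    Finite W ∧ ∃ k : ℕ, 1 ≤ k ∧
      (∃ D : Set W, TotalDomSet G D ∧ D.ncard = 4 * k) ∧
      (∀ D E : Set W, (∀ u ∈ E, L u = Status.B) →
        (∀ u, u ∉ E → ∃ w ∈ D, G.Adj u w) → 4 * k ≤ D.ncard) ∧
      (∀ u : W, L u ≠ Status.C → 2 ≤ (G.neighborSet u).ncard) ∧
      (∀ v : W, IsLeaf G v → ∃ X : Set W, v ∈ X ∧ X.ncard = 4 * k - 1 ∧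
        ∀ u : W, u ≠ v → ∃ w ∈ X, G.Adj u w) := by
  induction h with
  | base =>
    refine ⟨inferInstance, 1, le_refl 1, ?_, ?_, ?_, ?_⟩
    · -- total dominating set {1,2,3,4}
      refine ⟨{1, 2, 3, 4}, ?_, by rw [ncard1234]⟩
      intro u
      fin_cases u
      · exact ⟨1, by simp, pg_adj (by decide)⟩
      · exact ⟨2, by simp, pg_adj (by decide)⟩
      · exact ⟨1, by simp, pg_adj (by decide)⟩
      · exact ⟨4, by simp, pg_adj (by decide)⟩
      · exact ⟨3, by simp, pg_adj (by decide)⟩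
      · exact ⟨4, by simp, pg_adj (by decide)⟩
    · -- lower bound
      intro D E hE hdom
      have hnE : ∀ i : Fin 6, pathLabel i ≠ Status.B → i ∉ E :=
        fun i hi h => hi (hE i h)
      have get : ∀ i : Fin 6, i ∉ E → ∃ w ∈ D, (pathGraph 6).Adj i w := hdom
      obtain ⟨w0, hw0, ha0⟩ := get 0 (hnE 0 (by decide))
      obtain ⟨w5, hw5, ha5⟩ := get 5 (hnE 5 (by decide))
      obtain ⟨w1, hw1, ha1⟩ := get 1 (hnE 1 (by decide))
      obtain ⟨w4, hw4, ha4⟩ := get 4 (hnE 4 (by decide))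
      rw [pathGraph_adj] at ha0 ha5 ha1 ha4
      have hw0' : w0 = 1 := by omega
      have hw5' : w5 = 4 := by omega
      have hw1' : w1 = 0 ∨ w1 = 2 := by omega
      have hw4' : w4 = 3 ∨ w4 = 5 := by omega
      subst hw0' hw5'
      rcases hw1' with rfl | rfl <;> rcases hw4' with rfl | rfl <;>
        exact mem4_ncard (Set.toFinite D) hw0 hw5 hw1 hw4
          (by decide) (by decide) (by decide) (by decide) (by decide) (by decide)
    · -- degree bound
      intro u hu
      have hu' : u = 1 ∨ u = 2 ∨ u = 3 ∨ u = 4 := by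
        revert hu; fin_cases u <;> decide
      have key : ∀ i j l : Fin 6, (pathGraph 6).Adj i j → (pathGraph 6).Adj i l →
          j ≠ l → 2 ≤ ((pathGraph 6).neighborSet i).ncard := by
        intro i j l hj hl hjl
        exact mem2_ncard (Set.toFinite _) hj hl hjl
      rcases hu' with rfl | rfl | rfl | rfl
      · exact key 1 0 2 (pg_adj (by decide)) (pg_adj (by decide)) (by decide)
      · exact key 2 1 3 (pg_adj (by decide)) (pg_adj (by decide)) (by decide)
      · exact key 3 2 4 (pg_adj (by decide)) (pg_adj (by decide)) (by decide)
      · exact key 4 3 5 (pg_adj (by decide)) (pg_adj (by decide)) (by decide)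
    · -- leaves
      intro v hv
      have hdeg : ∀ u : Fin 6, pathLabel u ≠ Status.C →
          2 ≤ ((pathGraph 6).neighborSet u).ncard := by
        intro u hu
        have hu' : u = 1 ∨ u = 2 ∨ u = 3 ∨ u = 4 := by
          revert hu; fin_cases u <;> decide
        rcases hu' with rfl | rfl | rfl | rfl
        · exact mem2_ncard (Set.toFinite _) (show (0:Fin 6) ∈ _ from pg_adj (by decide))
            (show (2:Fin 6) ∈ _ from pg_adj (by decide)) (by decide)
        · exact mem2_ncard (Set.toFinite _) (show (1:Fin 6) ∈ _ from pg_adj (by decide))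
            (show (3:Fin 6) ∈ _ from pg_adj (by decide)) (by decide)
        · exact mem2_ncard (Set.toFinite _) (show (2:Fin 6) ∈ _ from pg_adj (by decide))
            (show (4:Fin 6) ∈ _ from pg_adj (by decide)) (by decide)
        · exact mem2_ncard (Set.toFinite _) (show (3:Fin 6) ∈ _ from pg_adj (by decide))
            (show (5:Fin 6) ∈ _ from pg_adj (by decide)) (by decide)
      have hv05 : v = 0 ∨ v = 5 := by
        by_contra hc
        push_neg at hc
        have hC : pathLabel v ≠ Status.C := by
          revert hc; fin_cases v <;> decide
        have := hdeg v hC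
        rw [IsLeaf] at hv
        omega
      rcases hv05 with rfl | rfl
      · refine ⟨{0, 3, 4}, by simp, by rw [ncard034], ?_⟩
        intro u hu
        fin_cases u
        · exact absurd rfl hu
        · exact ⟨0, by simp, pg_adj (by decide)⟩
        · exact ⟨3, by simp, pg_adj (by decide)⟩
        · exact ⟨4, by simp, pg_adj (by decide)⟩
        · exact ⟨3, by simp, pg_adj (by decide)⟩
        · exact ⟨4, by simp, pg_adj (by decide)⟩
      · refine ⟨{5, 2, 1}, by simp, by rw [ncard521], ?_⟩
        intro u hu
        fin_cases u
        · exact ⟨1, by simp, pg_adj (by decide)⟩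
        · exact ⟨2, by simp, pg_adj (by decide)⟩
        · exact ⟨1, by simp, pg_adj (by decide)⟩
        · exact ⟨2, by simp, pg_adj (by decide)⟩
        · exact ⟨5, by simp, pg_adj (by decide)⟩
        · exact absurd rfl hu
  | @step W G L h vatt hvatt IH =>
    obtain ⟨hFin, k, hk1, ⟨D0, hD0t, hD0c⟩, hlow, hdeg, hleaf⟩ := IH
    haveI : Finite W := hFin
    have memR : ∀ (s : Set W) (t : Set (Fin 6)) (j : Fin 6), j ∈ t →
        inr j ∈ inl '' s ∪ inr '' t :=
      fun s t j hj => Set.mem_union_right _ (Set.mem_image_of_mem _ hj)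
    have memL : ∀ (s : Set W) (t : Set (Fin 6)) (a : W), a ∈ s →
        inl a ∈ inl '' s ∪ inr '' t :=
      fun s t a ha => Set.mem_union_left _ (Set.mem_image_of_mem _ ha)
    have ncardLR : ∀ (s : Set W) (t : Set (Fin 6)),
        (inl '' s ∪ inr '' t : Set (W ⊕ Fin 6)).ncard = s.ncard + t.ncard := by
      intro s t
      rw [Set.ncard_union_eq (by simp [Set.disjoint_left]) (Set.toFinite _)
          (Set.toFinite _),
        Set.ncard_image_of_injective _ inl_injective,
        Set.ncard_image_of_injective _ inr_injective]
    have hdeg' : ∀ u : W ⊕ Fin 6,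
        (match u with | Sum.inl a => L a | Sum.inr i => pathLabel i) ≠ Status.C →
        2 ≤ ((attachPath6 G vatt).neighborSet u).ncard := by
      rintro (a | i) hu
      · have h2 := hdeg a hu
        have hsub : inl '' G.neighborSet a ⊆
            (attachPath6 G vatt).neighborSet (inl a) := by
          rintro x ⟨b, hb, rfl⟩; exact hb
        calc 2 ≤ (G.neighborSet a).ncard := h2
          _ = (inl '' G.neighborSet a).ncard :=
            (Set.ncard_image_of_injective _ inl_injective).symm
          _ ≤ _ := Set.ncard_le_ncard hsub (Set.toFinite _)
      · have hu2 : pathLabel i ≠ Status.C := hu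
        clear hu
        have hi : i = 1 ∨ i = 2 ∨ i = 3 ∨ i = 4 := by
          revert hu2; fin_cases i <;> decide
        have two : ∀ j l : Fin 6, (pathGraph 6).Adj i j → (pathGraph 6).Adj i l →
            j ≠ l → 2 ≤ ((attachPath6 G vatt).neighborSet (inr i)).ncard := by
          intro j l hj hl hjl
          exact mem2_ncard (Set.toFinite _)
            (show (attachPath6 G vatt).Adj (inr i) (inr j) from hj)
            (show (attachPath6 G vatt).Adj (inr i) (inr l) from hl)
            (fun hx => hjl (inr_injective hx))
        rcases hi with rfl | rfl | rfl | rfl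
        · exact two 0 2 (pg_adj (by decide)) (pg_adj (by decide)) (by decide)
        · exact two 1 3 (pg_adj (by decide)) (pg_adj (by decide)) (by decide)
        · exact two 2 4 (pg_adj (by decide)) (pg_adj (by decide)) (by decide)
        · exact two 3 5 (pg_adj (by decide)) (pg_adj (by decide)) (by decide)
    refine ⟨inferInstance, k + 1, by omega, ?_, ?_, hdeg', ?_⟩
    · -- total dominating set
      refine ⟨inl '' D0 ∪ inr '' {1, 2, 3, 4}, ?_, ?_⟩
      · rintro (a | i)
        · obtain ⟨w, hw, hadj⟩ := hD0t a
          exact ⟨inl w, memL _ _ w hw, hadj⟩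
        · fin_cases i
          · exact ⟨inr 1, memR _ _ 1 (by simp), pg_adj (by decide)⟩
          · exact ⟨inr 2, memR _ _ 2 (by simp), pg_adj (by decide)⟩
          · exact ⟨inr 1, memR _ _ 1 (by simp), pg_adj (by decide)⟩
          · exact ⟨inr 4, memR _ _ 4 (by simp), pg_adj (by decide)⟩
          · exact ⟨inr 3, memR _ _ 3 (by simp), pg_adj (by decide)⟩
          · exact ⟨inr 4, memR _ _ 4 (by simp), pg_adj (by decide)⟩
      · rw [ncardLR, hD0c, ncard1234]; ring
    · -- lower bound
      intro D E hE hdom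
      set Dw : Set W := {a | inl a ∈ D} with hDwdef
      set Dp : Set (Fin 6) := {i | inr i ∈ D} with hDpdef
      have hD_eq : D = inl '' Dw ∪ inr '' Dp := by
        ext x
        rcases x with a | i <;> simp [hDwdef, hDpdef]
      have hnE : ∀ i : Fin 6, pathLabel i ≠ Status.B → inr i ∉ E :=
        fun i hi hmem => hi (hE _ hmem)
      have getp : ∀ i : Fin 6, pathLabel i ≠ Status.B → (i : ℕ) ≠ 2 →
          ∃ j ∈ Dp, (pathGraph 6).Adj i j := by
        intro i hiB hi2
        obtain ⟨w, hw, hadj⟩ := hdom (inr i) (hnE i hiB)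
        rcases w with a | j
        · exact absurd (attach_adj_rl.mp hadj).2 hi2
        · exact ⟨j, hw, hadj⟩
      obtain ⟨j0, hj0, ha0⟩ := getp 0 (by decide) (by decide)
      obtain ⟨j5, hj5, ha5⟩ := getp 5 (by decide) (by decide)
      obtain ⟨j1, hj1, ha1⟩ := getp 1 (by decide) (by decide)
      obtain ⟨j4, hj4, ha4⟩ := getp 4 (by decide) (by decide)
      rw [pathGraph_adj] at ha0 ha5 ha1 ha4
      have hj0' : j0 = 1 := by omega
      have hj5' : j5 = 4 := by omega
      have hj1' : j1 = 0 ∨ j1 = 2 := by omega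
      have hj4' : j4 = 3 ∨ j4 = 5 := by omega
      subst hj0' hj5'
      have hDp4 : 4 ≤ Dp.ncard := by
        rcases hj1' with rfl | rfl <;> rcases hj4' with rfl | rfl <;>
          exact mem4_ncard (Set.toFinite Dp) hj0 hj5 hj1 hj4
            (by decide) (by decide) (by decide) (by decide) (by decide) (by decide)
      have hDw4 : 4 * k ≤ Dw.ncard := by
        apply hlow Dw ({a | inl a ∈ E} ∪ {vatt})
        · rintro a (ha | ha)
          · exact hE _ ha
          · rw [Set.mem_singleton_iff] at ha; rw [ha]; exact hvatt
        · intro a ha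
          have hane : a ≠ vatt := fun hh => ha (Or.inr (by rw [hh]; rfl))
          have hniE : inl a ∉ E := fun hh => ha (Or.inl hh)
          obtain ⟨w, hw, hadj⟩ := hdom (inl a) hniE
          rcases w with b | j
          · exact ⟨b, hw, hadj⟩
          · exact absurd (attach_adj_lr.mp hadj).1 hane
      have : D.ncard = Dw.ncard + Dp.ncard := by rw [hD_eq, ncardLR]
      omega
    · -- leaves
      rintro (a | i) hv
      · -- old leaf
        have hLa : L a = Status.C := by
          by_contra hc
          have := hdeg' (inl a) hc
          rw [IsLeaf] at hv
          omega
        have hane : a ≠ vatt := fun hh => by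
          rw [hh] at hLa; rw [hvatt] at hLa; cases hLa
        have hlf : IsLeaf G a := by
          rw [IsLeaf] at hv ⊢
          rw [attach_nbr_inl hane, Set.ncard_image_of_injective _ inl_injective] at hv
          exact hv
        obtain ⟨X, hXv, hXc, hXdom⟩ := hleaf a hlf
        refine ⟨inl '' X ∪ inr '' {1, 2, 3, 4}, memL _ _ a hXv, ?_, ?_⟩
        · rw [ncardLR, hXc, ncard1234]; omega
        · rintro (b | i) hu
          · have hba : b ≠ a := fun hh => hu (by rw [hh])
            obtain ⟨w, hw, hadj⟩ := hXdom b hba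
            exact ⟨inl w, memL _ _ w hw, hadj⟩
          · fin_cases i
            · exact ⟨inr 1, memR _ _ 1 (by simp), pg_adj (by decide)⟩
            · exact ⟨inr 2, memR _ _ 2 (by simp), pg_adj (by decide)⟩
            · exact ⟨inr 1, memR _ _ 1 (by simp), pg_adj (by decide)⟩
            · exact ⟨inr 2, memR _ _ 2 (by simp), pg_adj (by decide)⟩
            · exact ⟨inr 3, memR _ _ 3 (by simp), pg_adj (by decide)⟩
            · exact ⟨inr 4, memR _ _ 4 (by simp), pg_adj (by decide)⟩
      · -- new leaf
        have hLi : pathLabel i = Status.C := by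
          by_contra hc
          have := hdeg' (inr i) hc
          rw [IsLeaf] at hv
          omega
        have hi05 : i = 0 ∨ i = 5 := by
          revert hLi; fin_cases i <;> decide
        rcases hi05 with rfl | rfl
        · refine ⟨inl '' D0 ∪ inr '' {0, 3, 4}, memR _ _ 0 (by simp), ?_, ?_⟩
          · rw [ncardLR, hD0c, ncard034]; omega
          · rintro (b | j) hu
            · obtain ⟨w, hw, hadj⟩ := hD0t b
              exact ⟨inl w, memL _ _ w hw, hadj.symm⟩
            · fin_cases j
              · exact absurd rfl hu
              · exact ⟨inr 0, memR _ _ 0 (by simp), pg_adj (by decide)⟩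
              · exact ⟨inr 3, memR _ _ 3 (by simp), pg_adj (by decide)⟩
              · exact ⟨inr 4, memR _ _ 4 (by simp), pg_adj (by decide)⟩
              · exact ⟨inr 3, memR _ _ 3 (by simp), pg_adj (by decide)⟩
              · exact ⟨inr 4, memR _ _ 4 (by simp), pg_adj (by decide)⟩
        · refine ⟨inl '' D0 ∪ inr '' {5, 2, 1}, memR _ _ 5 (by simp), ?_, ?_⟩
          · rw [ncardLR, hD0c, ncard521]; omega
          · rintro (b | j) hu
            · obtain ⟨w, hw, hadj⟩ := hD0t b
              exact ⟨inl w, memL _ _ w hw, hadj.symm⟩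
            · fin_cases j
              · exact ⟨inr 1, memR _ _ 1 (by simp), pg_adj (by decide)⟩
              · exact ⟨inr 2, memR _ _ 2 (by simp), pg_adj (by decide)⟩
              · exact ⟨inr 1, memR _ _ 1 (by simp), pg_adj (by decide)⟩
              · exact ⟨inr 2, memR _ _ 2 (by simp), pg_adj (by decide)⟩
              · exact ⟨inr 5, memR _ _ 5 (by simp), pg_adj (by decide)⟩
              · exact absurd rfl hu

/-- For every leaf `v` of a tree `T` with `(T, S) ∈ 𝒯` there is a set `X` of
cardinality `γ_t(T) - 1` containing `v` such that every vertex except `v` has a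
neighbor in `X`. -/
theorem InT_leaf_almost_totalDom {W : Type} {G : SimpleGraph W} {L : W → Status}
    (h : InT W G L) (v : W) (hv : IsLeaf G v) :
    ∃ X : Set W, v ∈ X ∧ X.ncard = totalDomNum G - 1 ∧
      ∀ u : W, u ≠ v → ∃ w ∈ X, G.Adj u w := by
  obtain ⟨hFin, k, hk1, ⟨D0, hD0t, hD0c⟩, hlow, hdeg, hleaf⟩ := InT_key h
  haveI : Finite W := hFin
  have htd : totalDomNum G = 4 * k := by
    have hmem : 4 * k ∈ {n | ∃ S : Set W, TotalDomSet G S ∧ S.ncard = n} :=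
      ⟨D0, hD0t, hD0c⟩
    refine le_antisymm (Nat.sInf_le hmem) ?_
    obtain ⟨S0, hS0, hc⟩ := Nat.sInf_mem (Set.nonempty_of_mem hmem)
    rw [totalDomNum, ← hc]
    exact hlow S0 ∅ (by simp) (fun u _ => by
      obtain ⟨w, hw, hadj⟩ := hS0 u
      exact ⟨w, hw, hadj.symm⟩)
  obtain ⟨X, hXv, hXc, hXdom⟩ := hleaf v hv
  exact ⟨X, hXv, by rw [htd, hXc], hXdom⟩
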